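/- For M > 0 and Λ > 0, the polynomial equation 1 - 2M/r - Λr²/3 = 0 (equivalently Λr³ - 3r + 6M = 0) admits exactly two distinct positive real roots if and only if 0 < M < 1/(3√Λ), i.e. 9M²Λ < 1. -/

import Mathlib

/-- If `r₁ ≠ r₂` are two roots of the cubic, then `Λ(r₁²+r₁r₂+r₂²) = 3`. -/
lemma aux_sum_sq (M Λ r₁ r₂ : ℝ) (hne : r₁ ≠ r₂)
    (h1 : Λ*r₁^3 - 3*r₁ + 6*M = 0) (h2 : Λ*r₂^3 - 3*r₂ + 6*M = 0) :
    Λ*(r₁^2 + r₁*r₂ + r₂^2) = 3 := by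
  have key : (r₁ - r₂) * (Λ*(r₁^2 + r₁*r₂ + r₂^2) - 3) = 0 := by
    linear_combination h1 - h2
  rcases mul_eq_zero.mp key with h | h
  · exact absurd (sub_eq_zero.mp h) hne
  · linarith [sub_eq_zero.mp (by linarith : Λ*(r₁^2 + r₁*r₂ + r₂^2) - 3 = 0)]

lemma aux_prod (M Λ r₁ r₂ : ℝ) (h1 : Λ*r₁^3 - 3*r₁ + 6*M = 0)
    (h3 : Λ*(r₁^2 + r₁*r₂ + r₂^2) = 3) :
    6*M = Λ*r₁*r₂*(r₁+r₂) := by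
  linear_combination h1 - r₁*h3

/-- The cubic `Λ r³ - 3 r + 6 M = 0` (i.e. `1 - 2M/r - Λr²/3 = 0`) has exactly
two distinct positive real roots if and only if `9 M² Λ < 1`. -/
theorem two_positive_roots_iff_subextremal (M Λ : ℝ) (hM : 0 < M) (hΛ : 0 < Λ) :
    (∃ r₁ r₂ : ℝ, 0 < r₁ ∧ 0 < r₂ ∧ r₁ ≠ r₂ ∧
      Λ*r₁^3 - 3*r₁ + 6*M = 0 ∧ Λ*r₂^3 - 3*r₂ + 6*M = 0 ∧
      ∀ r : ℝ, 0 < r → Λ*r^3 - 3*r + 6*M = 0 → r = r₁ ∨ r = r₂) ↔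
    9*M^2*Λ < 1 := by
  constructor
  · rintro ⟨r₁, r₂, h₁, h₂, hne, e1, e2, -⟩
    have h3 := aux_sum_sq M Λ r₁ r₂ hne e1 e2
    have h4 := aux_prod M Λ r₁ r₂ e1 h3
    have hd : r₁ - r₂ ≠ 0 := sub_ne_zero.mpr hne
    have hsq : (0:ℝ) < (r₁ - r₂)^2 := by positivity
    have h5 : Λ*(r₁*r₂) = Λ*(r₁+r₂)^2 - 3 := by linear_combination -h3
    have hxy : (0:ℝ) < Λ*(r₁*r₂) := by positivity
    have ht3 : 3 < Λ*(r₁+r₂)^2 := by linarith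
    have ht4 : Λ*(r₁+r₂)^2 < 4 := by nlinarith [mul_pos hΛ hsq]
    have h6M : 6*M = (Λ*(r₁+r₂)^2 - 3)*(r₁+r₂) := by
      linear_combination h4 + (r₁+r₂)*h5
    have key : 36*M^2*Λ = (Λ*(r₁+r₂)^2 - 3)^2*(Λ*(r₁+r₂)^2) := by
      linear_combination (Λ*(6*M + (Λ*(r₁+r₂)^2 - 3)*(r₁+r₂)))*h6M
    have hpos : (0:ℝ) < (4 - Λ*(r₁+r₂)^2)*(Λ*(r₁+r₂)^2 - 1)^2 := by
      apply mul_pos (by linarith)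
      have : Λ*(r₁+r₂)^2 - 1 ≠ 0 := by intro h; nlinarith
      positivity
    nlinarith [key, hpos]
  · intro hsub
    set s := Real.sqrt Λ with hs
    have hs0 : 0 < s := Real.sqrt_pos.mpr hΛ
    have hs2 : s^2 = Λ := Real.sq_sqrt hΛ.le
    have hMs : 3*M*s < 1 := by
      nlinarith [sq_nonneg (3*M*s - 1), sq_nonneg (3*M*s + 1)]
    set f : ℝ → ℝ := fun r => Λ*r^3 - 3*r + 6*M with hf
    have hcont : Continuous f := by fun_prop
    have hfa : f (1/s) < 0 := by
      have : f (1/s) = 6*M - 2/s := by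
        simp only [hf]; field_simp
        nlinarith [hs2]
      rw [this]
      rw [sub_neg, lt_div_iff₀ hs0]
      linarith
    have hf0 : f 0 = 6*M := by simp [hf]
    have hfb : f (2/s) > 0 := by
      have : f (2/s) = 2/s + 6*M := by
        simp only [hf]; field_simp
        nlinarith [hs2]
      rw [this]; positivity
    -- root in [0, 1/s]
    obtain ⟨r₁, hr₁mem, hr₁⟩ : ∃ r ∈ Set.Icc (0:ℝ) (1/s), f r = 0 := by
      have h := intermediate_value_Icc' (by positivity : (0:ℝ) ≤ 1/s) hcont.continuousOn
      have : (0:ℝ) ∈ Set.Icc (f (1/s)) (f 0) := ⟨hfa.le, by rw [hf0]; positivity⟩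
      obtain ⟨r, hr, hr'⟩ := h this
      exact ⟨r, hr, hr'⟩
    obtain ⟨r₂, hr₂mem, hr₂⟩ : ∃ r ∈ Set.Icc (1/s) (2/s), f r = 0 := by
      have h := intermediate_value_Icc (by
        rw [div_le_div_iff₀ hs0 hs0]; nlinarith : (1:ℝ)/s ≤ 2/s) hcont.continuousOn
      have : (0:ℝ) ∈ Set.Icc (f (1/s)) (f (2/s)) := ⟨hfa.le, hfb.le⟩
      obtain ⟨r, hr, hr'⟩ := h this
      exact ⟨r, hr, hr'⟩
    have hr₁pos : 0 < r₁ := by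
      rcases lt_or_eq_of_le hr₁mem.1 with h | h
      · exact h
      · exfalso; rw [← h] at hr₁; rw [hf0] at hr₁; linarith
    have hr₁lt : r₁ < 1/s := by
      rcases lt_or_eq_of_le hr₁mem.2 with h | h
      · exact h
      · exfalso; rw [h] at hr₁; linarith
    have hr₂gt : 1/s < r₂ := by
      rcases lt_or_eq_of_le hr₂mem.1 with h | h
      · exact h
      · exfalso; rw [← h] at hr₂; linarith
    have hr₂pos : 0 < r₂ := lt_trans (by positivity) hr₂gt
    have hne : r₁ ≠ r₂ := ne_of_lt (lt_trans hr₁lt hr₂gt)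
    have e1 : Λ*r₁^3 - 3*r₁ + 6*M = 0 := hr₁
    have e2 : Λ*r₂^3 - 3*r₂ + 6*M = 0 := hr₂
    refine ⟨r₁, r₂, hr₁pos, hr₂pos, hne, e1, e2, ?_⟩
    intro r hr hre
    have h3 := aux_sum_sq M Λ r₁ r₂ hne e1 e2
    have h4 := aux_prod M Λ r₁ r₂ e1 h3
    have key : Λ * ((r - r₁) * ((r - r₂) * (r + r₁ + r₂))) = 0 := by
      linear_combination hre - r*h3 - h4
    rcases mul_eq_zero.mp key with h | h
    · exact absurd h (ne_of_gt hΛ)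
    rcases mul_eq_zero.mp h with h | h
    · exact Or.inl (sub_eq_zero.mp h)
    rcases mul_eq_zero.mp h with h | h
    · exact Or.inr (sub_eq_zero.mp h)
    · exfalso; nlinarith
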